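/- arXiv:1609.08612 — 2 statements merged into one kernel-verified Lean document; each statement's English description precedes it below -/
import Mathlib

section
/- Let f : S¹ → S¹ be a homeomorphism of the unit circle. Then there exists a point ζ ∈ S¹ such that f(-ζ) = -f(ζ). -/
open Complex

private lemma circle_preconn : PreconnectedSpace (Metric.sphere (0 : ℂ) 1) :=
  Subtype.preconnectedSpace ((isConnected_sphere (E := ℂ)
    (by rw [Complex.rank_real_complex]; norm_num) (0 : ℂ) zero_le_one).isPreconnected)

/-- Let `f : S¹ → S¹` be a homeomorphism of the unit circle. Then there exists
`ζ ∈ S¹` with `f (-ζ) = - f ζ`. -/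
theorem stmt0 (f : Homeomorph (Metric.sphere (0 : ℂ) 1) (Metric.sphere (0 : ℂ) 1)) :
    ∃ ζ : Metric.sphere (0 : ℂ) 1, f (-ζ) = -(f ζ) := by
  by_contra hcon
  push_neg at hcon
  haveI := circle_preconn
  -- norm facts
  have hnorm : ∀ z : Metric.sphere (0 : ℂ) 1, ‖(z : ℂ)‖ = 1 := fun z => by
    have := z.2; simpa using this
  have hmc : ∀ z : Metric.sphere (0 : ℂ) 1, (z : ℂ) * starRingEnd ℂ (z : ℂ) = 1 := fun z => by
    rw [Complex.mul_conj]
    norm_cast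
    rw [Complex.normSq_eq_norm_sq]
    rw [hnorm z]; norm_num
  set g : Metric.sphere (0 : ℂ) 1 → ℂ :=
    fun ζ => (f (-ζ) : ℂ) * starRingEnd ℂ (f ζ : ℂ) with hg
  have hneg_cont : Continuous (fun ζ : Metric.sphere (0 : ℂ) 1 => -ζ) := by
    apply Continuous.subtype_mk
    exact continuous_subtype_val.neg
  have hgcont : Continuous g := by
    apply Continuous.mul
    · exact continuous_subtype_val.comp (f.continuous.comp hneg_cont)
    · exact Complex.continuous_conj.comp (continuous_subtype_val.comp f.continuous)
  have hgnorm : ∀ ζ, ‖g ζ‖ = 1 := fun ζ => by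
    simp [hg, norm_mul, hnorm]
  have hgne : ∀ ζ, g ζ ≠ -1 := by
    intro ζ h
    apply hcon ζ
    have h' : (f (-ζ) : ℂ) * starRingEnd ℂ (f ζ : ℂ) = -1 := h
    have : (f (-ζ) : ℂ) * (starRingEnd ℂ (f ζ : ℂ) * (f ζ : ℂ)) = -1 * (f ζ : ℂ) := by
      rw [← mul_assoc, h']
    rw [mul_comm (starRingEnd ℂ _) _, hmc, mul_one, neg_one_mul] at this
    exact Subtype.ext (by push_cast; exact this)
  have hgconj : ∀ ζ, g (-ζ) = starRingEnd ℂ (g ζ) := by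
    intro ζ
    simp only [hg, neg_neg, map_mul, Complex.conj_conj]
    ring
  -- g ζ ≠ -1 and norm 1 means arg ≠ π and in slitPlane
  have hslit : ∀ ζ, g ζ ∈ Complex.slitPlane := by
    intro ζ
    rcases eq_or_ne (g ζ).im 0 with him | him
    · left
      have h1 : (g ζ).re = 1 ∨ (g ζ).re = -1 := by
        have := hgnorm ζ
        rw [← Complex.abs_re_eq_norm.mpr him] at this
        rcases abs_eq (by norm_num : (0:ℝ) ≤ 1) |>.mp this with h | h
        · exact Or.inl h
        · exact Or.inr h
      rcases h1 with h | h
      · rw [h]; norm_num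
      · exact absurd (Complex.ext h (by simp [him])) (hgne ζ)
    · right; exact him
  have hargpi : ∀ ζ, Complex.arg (g ζ) ≠ Real.pi := by
    intro ζ h
    rw [Complex.arg_eq_pi_iff] at h
    have h1 : (g ζ).re = -1 := by
      have := hgnorm ζ
      rw [← Complex.abs_re_eq_norm.mpr h.2] at this
      rcases abs_eq (by norm_num : (0:ℝ) ≤ 1) |>.mp this with h' | h'
      · linarith [h.1]
      · exact h'
    exact absurd (Complex.ext h1 (by simp [h.2])) (hgne ζ)
  set φ : Metric.sphere (0 : ℂ) 1 → ℝ := fun ζ => Complex.arg (g ζ) with hφ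
  have hφcont : Continuous φ := by
    rw [continuous_iff_continuousAt]
    intro ζ
    exact (Complex.continuousAt_arg (hslit ζ)).comp hgcont.continuousAt
  have hφodd : ∀ ζ, φ (-ζ) = -φ ζ := by
    intro ζ
    simp only [hφ, hgconj ζ, Complex.arg_conj]
    rw [if_neg (hargpi ζ)]
  -- find a zero of φ
  have ζ₀ : Metric.sphere (0 : ℂ) 1 := ⟨1, by simp⟩
  have hzero : ∃ ζ, φ ζ = 0 := by
    rcases le_or_gt (φ ζ₀) 0 with h | h
    · have := intermediate_value_univ₂ (a := ζ₀) (b := -ζ₀) hφcont continuous_const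
        h (by rw [hφodd]; linarith)
      rcases this with ⟨ζ, hζ⟩; exact ⟨ζ, hζ⟩
    · have := intermediate_value_univ₂ (a := -ζ₀) (b := ζ₀) hφcont continuous_const
        (by rw [hφodd]; linarith) (le_of_lt h)
      rcases this with ⟨ζ, hζ⟩; exact ⟨ζ, hζ⟩
  obtain ⟨ζ, hζ⟩ := hzero
  -- then g ζ = 1
  have hg1 : g ζ = 1 := by
    have h0 := Complex.arg_eq_zero_iff.mp hζ
    have h1 : (g ζ).re = 1 := by
      have := hgnorm ζ
      rw [← Complex.abs_re_eq_norm.mpr h0.2] at this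
      rcases abs_eq (by norm_num : (0:ℝ) ≤ 1) |>.mp this with h' | h'
      · exact h'
      · linarith [h0.1]
    exact Complex.ext h1 h0.2
  -- so f(-ζ) = f ζ, contradiction with injectivity
  have hff : f (-ζ) = f ζ := by
    have h' : (f (-ζ) : ℂ) * starRingEnd ℂ (f ζ : ℂ) = 1 := hg1
    have : (f (-ζ) : ℂ) * (starRingEnd ℂ (f ζ : ℂ) * (f ζ : ℂ)) = 1 * (f ζ : ℂ) := by
      rw [← mul_assoc, h']
    rw [mul_comm (starRingEnd ℂ _) _, hmc, mul_one, one_mul] at this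
    exact Subtype.ext this
  have := f.injective hff
  have hζ0 : (ζ : ℂ) = 0 := by
    have h2 : (-ζ : Metric.sphere (0:ℂ) 1) = ζ := this
    have : -(ζ : ℂ) = (ζ : ℂ) := by
      have := congrArg Subtype.val h2
      simpa using this
    linear_combination -this / 2
  have := hnorm ζ
  rw [hζ0] at this
  simp at this
end

section
/- For every t ∈ [1, ∞), the operator norm on ℓᵗ(Fin 2) of the matrix a = (1/2)·[[1+i, 1−i], [1−i, 1+i]] equals 2^{|1/t − 1/2|}. -/
open scoped BigOperators

/-- The `ℓᵖ` norm on `ι → ℂ` for a real exponent `p`. -/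
noncomputable def pNorm {ι : Type*} [Fintype ι] (p : ℝ) (ξ : ι → ℂ) : ℝ :=
  (∑ i, ‖ξ i‖ ^ p) ^ (1 / p)

/-- The operator norm of a matrix acting on `ℓᵖ(ι)`. -/
noncomputable def opNormLp {ι : Type*} [Fintype ι] (p : ℝ) (M : Matrix ι ι ℂ) : ℝ :=
  sInf {c : ℝ | 0 ≤ c ∧ ∀ ξ : ι → ℂ, pNorm p (M.mulVec ξ) ≤ c * pNorm p ξ}

/-- The matrix `a = (1/2)·[[1+i, 1−i], [1−i, 1+i]]`. -/
noncomputable def aMat : Matrix (Fin 2) (Fin 2) ℂ :=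
  (1 / 2 : ℂ) • !![1 + Complex.I, 1 - Complex.I; 1 - Complex.I, 1 + Complex.I]

lemma lem1 {p q a b : ℝ} (hp : 0 < p) (hpq : p ≤ q) (ha : 0 ≤ a) (hb : 0 ≤ b) :
    (a ^ q + b ^ q) ^ (1 / q) ≤ (a ^ p + b ^ p) ^ (1 / p) := by
  lift a to NNReal using ha
  lift b to NNReal using hb
  have := NNReal.rpow_add_rpow_le a b hp hpq
  exact_mod_cast this

lemma lem2 {p q a b : ℝ} (hp : 0 < p) (hpq : p ≤ q) (ha : 0 ≤ a) (hb : 0 ≤ b) :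
    (a ^ p + b ^ p) ^ (1 / p) ≤ 2 ^ (1 / p - 1 / q) * (a ^ q + b ^ q) ^ (1 / q) := by
  lift a to NNReal using ha
  lift b to NNReal using hb
  have hq : 0 < q := hp.trans_le hpq
  have h1 : (1 : ℝ) ≤ q / p := (one_le_div hp).mpr hpq
  have key := NNReal.rpow_add_le_mul_rpow_add_rpow (a ^ p) (b ^ p) h1
  have hap : (a ^ p) ^ (q / p) = a ^ q := by
    rw [← NNReal.rpow_mul]; congr 1; field_simp
  have hbp : (b ^ p) ^ (q / p) = b ^ q := by
    rw [← NNReal.rpow_mul]; congr 1; field_simp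
  rw [hap, hbp] at key
  have key2 := NNReal.rpow_le_rpow key (le_of_lt (by positivity : (0:ℝ) < 1/q))
  rw [← NNReal.rpow_mul, NNReal.mul_rpow, ← NNReal.rpow_mul] at key2
  have e1 : q / p * (1 / q) = 1 / p := by
    first | (field_simp; ring) | field_simp
  have e2 : (q / p - 1) * (1 / q) = 1 / p - 1 / q := by
    first | (field_simp; ring) | field_simp
  rw [e1, e2] at key2
  exact_mod_cast key2

lemma pNorm_expand (p : ℝ) (ξ : Fin 2 → ℂ) :
    pNorm p ξ = (‖ξ 0‖ ^ p + ‖ξ 1‖ ^ p) ^ (1 / p) := by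
  simp [pNorm, Fin.sum_univ_two]

lemma mulVec0 (ξ : Fin 2 → ℂ) :
    aMat.mulVec ξ 0 = ((1 + Complex.I) * ξ 0 + (1 - Complex.I) * ξ 1) / 2 := by
  simp [aMat, Matrix.mulVec, dotProduct, Fin.sum_univ_two]
  ring

lemma mulVec1 (ξ : Fin 2 → ℂ) :
    aMat.mulVec ξ 1 = ((1 - Complex.I) * ξ 0 + (1 + Complex.I) * ξ 1) / 2 := by
  simp [aMat, Matrix.mulVec, dotProduct, Fin.sum_univ_two]
  ring

lemma pNorm_nonneg (p : ℝ) (ξ : Fin 2 → ℂ) : 0 ≤ pNorm p ξ := by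
  rw [pNorm_expand]
  positivity

lemma l2_iso (ξ : Fin 2 → ℂ) : pNorm 2 (aMat.mulVec ξ) = pNorm 2 ξ := by
  rw [pNorm_expand, pNorm_expand, mulVec0, mulVec1]
  congr 1
  have h2 : ∀ z : ℂ, ‖z‖ ^ (2:ℝ) = Complex.normSq z := by
    intro z
    rw [show (2:ℝ) = ((2:ℕ):ℝ) by norm_num, Real.rpow_natCast]
    rw [Complex.sq_norm]
  rw [h2, h2, h2, h2]
  obtain ⟨x1, x2⟩ := ξ 0
  obtain ⟨y1, y2⟩ := ξ 1
  simp [Complex.normSq_apply, Complex.add_re, Complex.add_im, Complex.div_re, Complex.div_im,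
    Complex.mul_re, Complex.mul_im, Complex.normSq, Complex.sub_re, Complex.sub_im]
  ring

lemma norm_one_add_I : ‖(1 + Complex.I : ℂ)‖ = (2:ℝ) ^ ((1:ℝ)/2) := by
  rw [Complex.norm_def, ← Real.sqrt_eq_rpow]
  congr 1
  simp [Complex.normSq_apply]
  norm_num

lemma norm_one_sub_I : ‖(1 - Complex.I : ℂ)‖ = (2:ℝ) ^ ((1:ℝ)/2) := by
  rw [Complex.norm_def, ← Real.sqrt_eq_rpow]
  congr 1
  simp [Complex.normSq_apply]
  norm_num

lemma norm_half_one_add_I : ‖((1 + Complex.I)/2 : ℂ)‖ = (2:ℝ) ^ (-(1:ℝ)/2) := by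
  rw [norm_div, norm_one_add_I]
  rw [show ‖(2:ℂ)‖ = ((2:ℝ) ^ (1:ℝ)) by simp]
  rw [← Real.rpow_sub (by norm_num)]
  norm_num

lemma norm_half_one_sub_I : ‖((1 - Complex.I)/2 : ℂ)‖ = (2:ℝ) ^ (-(1:ℝ)/2) := by
  rw [norm_div, norm_one_sub_I]
  rw [show ‖(2:ℂ)‖ = ((2:ℝ) ^ (1:ℝ)) by simp]
  rw [← Real.rpow_sub (by norm_num)]
  norm_num

/-- For every `t ∈ [1, ∞)`, the operator norm of `a` on `ℓᵗ(Fin 2)` equals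
`2 ^ |1/t − 1/2|`. -/
theorem stmt2 (t : ℝ) (ht : 1 ≤ t) :
    opNormLp t aMat = (2 : ℝ) ^ |1 / t - 1 / 2| := by
  have ht0 : 0 < t := lt_of_lt_of_le one_pos ht
  set C : ℝ := (2 : ℝ) ^ |1 / t - 1 / 2| with hCdef
  have hC0 : 0 ≤ C := Real.rpow_nonneg (by norm_num) _
  -- membership: C satisfies the bound
  have hmem : ∀ ξ : Fin 2 → ℂ, pNorm t (aMat.mulVec ξ) ≤ C * pNorm t ξ := by
    intro ξ
    rcases le_total t 2 with h | h
    · -- 1 ≤ t ≤ 2 : |1/t - 1/2| = 1/t - 1/2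
      have habs : |1 / t - 1 / 2| = 1 / t - 1 / 2 := by
        rw [abs_of_nonneg]
        have : 1 / 2 ≤ 1 / t := by
          apply one_div_le_one_div_of_le ht0 h
        linarith
      calc pNorm t (aMat.mulVec ξ)
          ≤ 2 ^ (1 / t - 1 / 2) * pNorm 2 (aMat.mulVec ξ) := by
            rw [pNorm_expand, pNorm_expand]
            exact lem2 ht0 h (norm_nonneg _) (norm_nonneg _)
        _ = 2 ^ (1 / t - 1 / 2) * pNorm 2 ξ := by rw [l2_iso]
        _ ≤ C * pNorm t ξ := by
            rw [hCdef, habs]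
            apply mul_le_mul_of_nonneg_left _ (Real.rpow_nonneg (by norm_num) _)
            rw [pNorm_expand, pNorm_expand]
            exact lem1 ht0 h (norm_nonneg _) (norm_nonneg _)
    · -- t ≥ 2 : |1/t - 1/2| = 1/2 - 1/t
      have habs : |1 / t - 1 / 2| = 1 / 2 - 1 / t := by
        rw [abs_of_nonpos]
        · ring
        have : 1 / t ≤ 1 / 2 := by
          apply one_div_le_one_div_of_le (by norm_num) h
        linarith
      calc pNorm t (aMat.mulVec ξ)
          ≤ pNorm 2 (aMat.mulVec ξ) := by
            rw [pNorm_expand, pNorm_expand]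
            exact lem1 (by norm_num) h (norm_nonneg _) (norm_nonneg _)
        _ = pNorm 2 ξ := l2_iso ξ
        _ ≤ C * pNorm t ξ := by
            rw [hCdef, habs]
            rw [pNorm_expand, pNorm_expand]
            exact lem2 (by norm_num) h (norm_nonneg _) (norm_nonneg _)
  have hCmem : C ∈ {c : ℝ | 0 ≤ c ∧ ∀ ξ : Fin 2 → ℂ, pNorm t (aMat.mulVec ξ) ≤ c * pNorm t ξ} :=
    ⟨hC0, hmem⟩
  -- lower bound
  have hlb : ∀ c ∈ {c : ℝ | 0 ≤ c ∧ ∀ ξ : Fin 2 → ℂ,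
      pNorm t (aMat.mulVec ξ) ≤ c * pNorm t ξ}, C ≤ c := by
    rintro c ⟨hc0, hc⟩
    rcases le_total t 2 with h | h
    · -- extremal vector ![1, 0]
      have habs : |1 / t - 1 / 2| = 1 / t - 1 / 2 := by
        rw [abs_of_nonneg]
        have : 1 / 2 ≤ 1 / t := one_div_le_one_div_of_le ht0 h
        linarith
      have key := hc ![1, 0]
      have hn : pNorm t ![1, 0] = 1 := by
        rw [pNorm_expand]
        simp [Real.zero_rpow ht0.ne', Real.one_rpow]
      have hm : pNorm t (aMat.mulVec ![1, 0]) = 2 ^ (1 / t - 1 / 2) := by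
        rw [pNorm_expand, mulVec0, mulVec1]
        have v0 : (![1, 0] : Fin 2 → ℂ) 0 = 1 := rfl
        have v1 : (![1, 0] : Fin 2 → ℂ) 1 = 0 := rfl
        rw [v0, v1]
        simp only [mul_one, mul_zero, add_zero]
        rw [norm_half_one_add_I, norm_half_one_sub_I]
        have hA : ((2:ℝ) ^ (-(1:ℝ)/2)) ^ t = 2 ^ (-(t/2)) := by
          rw [← Real.rpow_mul (by norm_num)]; ring_nf
        rw [hA, ← two_mul]
        have hB : (2:ℝ) * 2 ^ (-(t/2)) = 2 ^ (1 + -(t/2)) := by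
          rw [Real.rpow_add (by norm_num), Real.rpow_one]
        rw [hB, ← Real.rpow_mul (by norm_num)]
        congr 1
        field_simp
        ring
      rw [hn, mul_one] at key
      rw [hCdef, habs]
      exact le_trans (le_of_eq hm.symm) key
    · -- extremal vector ![1, I]
      have habs : |1 / t - 1 / 2| = 1 / 2 - 1 / t := by
        rw [abs_of_nonpos]
        · ring
        have : 1 / t ≤ 1 / 2 := one_div_le_one_div_of_le (by norm_num) h
        linarith
      have key := hc ![1, Complex.I]
      have hn : pNorm t ![1, Complex.I] = 2 ^ (1 / t) := by
        rw [pNorm_expand]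
        have v0 : (![1, Complex.I] : Fin 2 → ℂ) 0 = 1 := rfl
        have v1 : (![1, Complex.I] : Fin 2 → ℂ) 1 = Complex.I := rfl
        rw [v0, v1]
        simp [Real.one_rpow]
        rw [show ((1:ℝ) + 1) = (2:ℝ) ^ (1:ℝ) by norm_num,
          ← Real.rpow_mul (by norm_num)]
        norm_num
      have hm : pNorm t (aMat.mulVec ![1, Complex.I]) = 2 ^ ((1:ℝ) / 2) := by
        rw [pNorm_expand, mulVec0, mulVec1]
        have v0 : (![1, Complex.I] : Fin 2 → ℂ) 0 = 1 := rfl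
        have v1 : (![1, Complex.I] : Fin 2 → ℂ) 1 = Complex.I := rfl
        rw [v0, v1]
        have e0 : ((1 + Complex.I) * 1 + (1 - Complex.I) * Complex.I) / 2
            = 1 + Complex.I := by
          have : Complex.I * Complex.I = -1 := Complex.I_mul_I
          field_simp
          linear_combination (-1 : ℂ) * this
        have e1 : ((1 - Complex.I) * 1 + (1 + Complex.I) * Complex.I) / 2 = 0 := by
          have : Complex.I * Complex.I = -1 := Complex.I_mul_I
          field_simp
          linear_combination this
        rw [e0, e1, norm_one_add_I, norm_zero, Real.zero_rpow ht0.ne', add_zero]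
        rw [show ((2:ℝ)^((1:ℝ)/2))^t = 2^(t/2) by
          rw [← Real.rpow_mul (by norm_num)]; ring_nf]
        rw [← Real.rpow_mul (by norm_num : (0:ℝ) ≤ 2)]
        congr 1
        field_simp
      rw [hn, hm] at key
      rw [hCdef, habs]
      have hpos : (0:ℝ) < 2 ^ (1 / t) := Real.rpow_pos_of_pos (by norm_num) _
      have := (div_le_iff₀ hpos).mpr key
      rwa [← Real.rpow_sub (by norm_num)] at this
  show sInf _ = C
  exact le_antisymm (csInf_le ⟨0, fun c hc => hc.1⟩ hCmem) (le_csInf ⟨C, hCmem⟩ hlb)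
end
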